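/- Let ν = Σ_{n∈ℕ} w_n ν_n with w_n = (6/π²)n^{−2}, where each ν_n is a probability measure on X^∞. Suppose for each n there is a set S_n ⊆ X^n and a constant c_n > 0 with −log c_n = o(n), such that ν_n(x_{1..n}) ≥ c_n ρ(x_{1..n}) for all x_{1..n} ∈ S_n, and μ(X^n \ S_n) → 0. If additionally d_n(μ,ρ) = o(n) and ν(x_{1..n}) ≥ w'_n |X|^{−n} for all x_{1..n} with μ(x_{1..n}) > 0, where −log w'_n = o(n), then d_n(μ,ν) = o(n). -/

import Mathlib

open MeasureTheory Filter Set
open scoped ENNReal Topology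

/-- The cylinder set `[x_{1..n}]` of all infinite sequences over `X` starting with the word `s`. -/
def cylSet {X : Type*} [MeasurableSpace X] {n : ℕ} (s : Fin n → X) : Set (ℕ → X) :=
  {ω | ∀ i : Fin n, ω (i : ℕ) = s i}

/-- The probability `μ(x_{1..n})` of the word `s` (cylinder probability), as a real number. -/
noncomputable def cylP {X : Type*} [MeasurableSpace X] (μ : Measure (ℕ → X)) {n : ℕ}
    (s : Fin n → X) : ℝ :=
  (μ (cylSet s)).toReal

open scoped Classical in
/-- The `n`-step Kullback-Leibler divergence `d_n(μ,ρ)` between the restrictions of `μ` and `ρ`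
to the first `n` observations, with the convention that terms with `μ(x_{1..n}) = 0` vanish. -/
noncomputable def klDn {X : Type*} [Fintype X] [MeasurableSpace X]
    (μ ρ : Measure (ℕ → X)) (n : ℕ) : ℝ :=
  ∑ s : Fin n → X, if cylP μ s = 0 then 0 else cylP μ s * Real.log (cylP μ s / cylP ρ s)

section aux
variable {X : Type*} [Fintype X] [MeasurableSpace X] [MeasurableSingletonClass X]

lemma measurable_cylSet {n : ℕ} (s : Fin n → X) : MeasurableSet (cylSet s) := by
  have h : cylSet s = ⋂ i : Fin n, (fun ω : ℕ → X => ω (i : ℕ)) ⁻¹' {s i} := by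
    ext ω; simp [cylSet]
  rw [h]
  exact MeasurableSet.iInter fun i =>
    (measurable_pi_apply (i : ℕ)) (measurableSet_singleton (s i))

lemma pairwise_disjoint_cylSet {n : ℕ} :
    Pairwise (Function.onFun Disjoint (fun s : Fin n → X => cylSet s)) := by
  intro s t hst
  rw [Function.onFun, Set.disjoint_left]
  intro ω hs ht
  exact hst (funext fun i => (hs i).symm.trans (ht i))

lemma iUnion_cylSet {n : ℕ} : (⋃ s : Fin n → X, cylSet s) = Set.univ := by
  ext ω
  simp only [Set.mem_iUnion, Set.mem_univ, iff_true]
  exact ⟨fun i => ω (i : ℕ), fun i => rfl⟩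

lemma sum_cylP (κ : Measure (ℕ → X)) [IsFiniteMeasure κ] (n : ℕ) :
    ∑ s : Fin n → X, cylP κ s = (κ Set.univ).toReal := by
  unfold cylP
  rw [← ENNReal.toReal_sum (fun s _ => measure_ne_top κ _)]
  congr 1
  rw [← tsum_fintype (L := .unconditional _), ← measure_iUnion pairwise_disjoint_cylSet
    (fun s => measurable_cylSet s), iUnion_cylSet]

lemma cylP_nonneg (κ : Measure (ℕ → X)) {n : ℕ} (s : Fin n → X) : 0 ≤ cylP κ s :=
  ENNReal.toReal_nonneg

lemma cylP_le_one (κ : Measure (ℕ → X)) [IsProbabilityMeasure κ] {n : ℕ} (s : Fin n → X) :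
    cylP κ s ≤ 1 := by
  have := prob_le_one (μ := κ) (s := cylSet s)
  simpa [cylP] using ENNReal.toReal_mono (by simp) this

/-- Per-term lower bound `μ s * log (μ s / κ s) ≥ μ s - κ s`. -/
lemma term_lb (μ κ : Measure (ℕ → X)) {n : ℕ} (s : Fin n → X)
    (h : 0 < cylP μ s → 0 < cylP κ s) :
    cylP μ s - cylP κ s ≤
      (if cylP μ s = 0 then 0 else cylP μ s * Real.log (cylP μ s / cylP κ s)) := by
  by_cases h0 : cylP μ s = 0
  · simp [h0, cylP_nonneg κ s]
  · rw [if_neg h0]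
    have hμ : 0 < cylP μ s := lt_of_le_of_ne (cylP_nonneg μ s) (Ne.symm h0)
    have hκ : 0 < cylP κ s := h hμ
    have hlog : 1 - (cylP κ s / cylP μ s) ≤ Real.log (cylP μ s / cylP κ s) := by
      have := Real.one_sub_inv_le_log_of_pos (div_pos hμ hκ)
      rwa [inv_div] at this
    have := mul_le_mul_of_nonneg_left hlog hμ.le
    calc cylP μ s - cylP κ s = cylP μ s * (1 - cylP κ s / cylP μ s) := by
          field_simp
      _ ≤ cylP μ s * Real.log (cylP μ s / cylP κ s) := this

end aux

open scoped Classical in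
/-- Steps (14)–(17) of the proof of Theorem 2: if `ν = Σ_n w_n ν_n` with `w_n = (6/π²)n⁻²`,
each `ν_n` lower-bounds `c_n ρ` on a set `S_n ⊆ X^n` with `−log c_n = o(n)` and
`μ(X^n \ S_n) → 0`, `d_n(μ,ρ) = o(n)`, and `ν(x_{1..n}) ≥ w'_n |X|^{−n}` for `μ`-positive
words with `−log w'_n = o(n)`, then `d_n(μ,ν) = o(n)`. -/
theorem mixture_predicts_of_bounds {X : Type*} [Fintype X] [MeasurableSpace X]
    [MeasurableSingletonClass X] (μ ρ : Measure (ℕ → X))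
    [IsProbabilityMeasure μ] [IsProbabilityMeasure ρ]
    (νf : ℕ → Measure (ℕ → X)) (hνf : ∀ n, IsProbabilityMeasure (νf n))
    (ν : Measure (ℕ → X))
    (hν : ν = Measure.sum fun n : ℕ =>
      ENNReal.ofReal (6 / Real.pi ^ 2 * ((n : ℝ) ^ 2)⁻¹) • νf n)
    (S : (n : ℕ) → Finset (Fin n → X))
    (c : ℕ → ℝ) (hc : ∀ n, 0 < c n)
    (hco : Tendsto (fun n => -Real.log (c n) / n) atTop (𝓝 0))
    (hlow : ∀ n, ∀ s ∈ S n, c n * cylP ρ s ≤ cylP (νf n) s)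
    (hSμ : Tendsto (fun n => ∑ s ∈ Finset.univ \ S n, cylP μ s) atTop (𝓝 0))
    (hac : ∀ (n : ℕ) (s : Fin n → X), cylP ρ s = 0 → cylP μ s = 0)
    (hd : Tendsto (fun n => klDn μ ρ n / n) atTop (𝓝 0))
    (w' : ℕ → ℝ) (hw' : ∀ n, 0 < w' n)
    (hw'o : Tendsto (fun n => -Real.log (w' n) / n) atTop (𝓝 0))
    (hνlow : ∀ (n : ℕ) (s : Fin n → X), 0 < cylP μ s →
      w' n * ((Fintype.card X : ℝ) ^ n)⁻¹ ≤ cylP ν s) :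
    Tendsto (fun n => klDn μ ν n / n) atTop (𝓝 0) := by
  classical
  -- X is nonempty
  have hXne : Nonempty X := by
    by_contra h
    haveI : IsEmpty X := not_nonempty_iff.mp h
    haveI : IsEmpty (ℕ → X) := ⟨fun f => IsEmpty.false (f 0)⟩
    have h1 : μ Set.univ = 1 := measure_univ
    rw [Set.univ_eq_empty_iff.mpr ‹IsEmpty (ℕ → X)›, measure_empty] at h1
    exact zero_ne_one h1
  have hcard1 : (1:ℝ) ≤ (Fintype.card X : ℝ) := by
    exact_mod_cast Fintype.card_pos
  have hcard0 : (0:ℝ) < (Fintype.card X : ℝ) := lt_of_lt_of_le one_pos hcard1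
  have hlogcard : 0 ≤ Real.log (Fintype.card X) := Real.log_nonneg hcard1
  have hπ : (0:ℝ) < 6 / Real.pi ^ 2 := by positivity
  set w : ℕ → ℝ := fun n => 6 / Real.pi ^ 2 * ((n : ℝ) ^ 2)⁻¹ with hwdef
  have hwnn : ∀ n, 0 ≤ w n := fun n => by positivity
  have hwpos : ∀ n : ℕ, 1 ≤ n → 0 < w n := by
    intro n hn
    have : (0:ℝ) < (n:ℝ) := by exact_mod_cast hn
    positivity
  -- ν is a finite measure
  have hsumw : Summable w := by
    have h : Summable (fun n : ℕ => ((n:ℝ) ^ 2)⁻¹) :=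
      Real.summable_nat_pow_inv.mpr one_lt_two
    exact h.mul_left _
  have hνuniv : ν Set.univ ≠ ⊤ := by
    rw [hν, Measure.sum_apply _ MeasurableSet.univ]
    have : ∀ n : ℕ, (ENNReal.ofReal (w n) • νf n) Set.univ = ENNReal.ofReal (w n) := by
      intro n
      haveI := hνf n
      simp [Measure.smul_apply, smul_eq_mul]
    rw [tsum_congr this, ← ENNReal.ofReal_tsum_of_nonneg hwnn hsumw]
    exact ENNReal.ofReal_ne_top
  haveI : IsFiniteMeasure ν := ⟨lt_top_iff_ne_top.mpr hνuniv⟩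
  -- mixture lower bound
  have hmix : ∀ (m : ℕ) (s : Fin m → X), w m * cylP (νf m) s ≤ cylP ν s := by
    intro m s
    have h1 : ENNReal.ofReal (w m) * (νf m) (cylSet s) ≤ ν (cylSet s) := by
      rw [hν, Measure.sum_apply _ (measurable_cylSet s)]
      simpa [Measure.smul_apply, smul_eq_mul] using
        ENNReal.le_tsum (f := fun k => (ENNReal.ofReal (w k) • νf k) (cylSet s)) m
    have h2 := ENNReal.toReal_mono (measure_ne_top ν _) h1
    rwa [ENNReal.toReal_mul, ENNReal.toReal_ofReal (hwnn m)] at h2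
  have hμsum : ∀ n : ℕ, ∑ s : Fin n → X, cylP μ s = 1 := by
    intro n; rw [sum_cylP, measure_univ, ENNReal.toReal_one]
  have hρsum : ∀ n : ℕ, ∑ s : Fin n → X, cylP ρ s = 1 := by
    intro n; rw [sum_cylP, measure_univ, ENNReal.toReal_one]
  -- positivity of ν on μ-positive cylinders
  have hνpos : ∀ (n : ℕ) (s : Fin n → X), 0 < cylP μ s → 0 < cylP ν s := by
    intro n s hμs
    refine lt_of_lt_of_le ?_ (hνlow n s hμs)
    have := hw' n
    positivity
  -- lower bound on klDn μ ν n
  have hLB : ∀ n : ℕ, 1 - (ν Set.univ).toReal ≤ klDn μ ν n := by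
    intro n
    have h1 : ∑ s : Fin n → X, (cylP μ s - cylP ν s) ≤ klDn μ ν n := by
      unfold klDn
      exact Finset.sum_le_sum fun s _ => term_lb μ ν s (hνpos n s)
    rw [Finset.sum_sub_distrib, hμsum n, sum_cylP] at h1
    exact h1
  -- upper bound on klDn μ ν n for n ≥ 1
  set A : ℕ → ℝ := fun n => -Real.log (w n) - Real.log (c n) with hA
  set B : ℕ → ℝ := fun n => max (-Real.log (w' n)) 0 + n * Real.log (Fintype.card X) with hB
  set ε : ℕ → ℝ := fun n => ∑ s ∈ Finset.univ \ S n, cylP μ s with hε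
  have hεnn : ∀ n, 0 ≤ ε n := fun n =>
    Finset.sum_nonneg fun s _ => cylP_nonneg μ s
  have hBnn : ∀ n, 0 ≤ B n := by
    intro n
    have : (0:ℝ) ≤ n * Real.log (Fintype.card X) := by positivity
    simp only [hB]
    have := le_max_right (-Real.log (w' n)) 0
    linarith
  have hUB : ∀ n : ℕ, 1 ≤ n →
      klDn μ ν n ≤ klDn μ ρ n + 1 + max (A n) 0 + B n * ε n := by
    intro n hn
    have hwn : 0 < w n := hwpos n hn
    set f : (Fin n → X) → ℝ := fun s =>
      if cylP μ s = 0 then 0 else cylP μ s * Real.log (cylP μ s / cylP ν s) with hf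
    set g : (Fin n → X) → ℝ := fun s =>
      if cylP μ s = 0 then 0 else cylP μ s * Real.log (cylP μ s / cylP ρ s) with hg
    have hsplitf : klDn μ ν n = ∑ s ∈ Finset.univ \ S n, f s + ∑ s ∈ S n, f s := by
      unfold klDn; rw [Finset.sum_sdiff (Finset.subset_univ (S n))]
    have hsplitg : klDn μ ρ n = ∑ s ∈ Finset.univ \ S n, g s + ∑ s ∈ S n, g s := by
      unfold klDn; rw [Finset.sum_sdiff (Finset.subset_univ (S n))]
    -- bound on S n
    have hSbound : ∑ s ∈ S n, f s ≤ ∑ s ∈ S n, g s + max (A n) 0 := by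
      have hterm : ∀ s ∈ S n, f s ≤ g s + cylP μ s * max (A n) 0 := by
        intro s hs
        by_cases h0 : cylP μ s = 0
        · simp [hf, hg, h0]
        · have hμs : 0 < cylP μ s := lt_of_le_of_ne (cylP_nonneg μ s) (Ne.symm h0)
          have hρs : 0 < cylP ρ s := by
            rcases lt_or_eq_of_le (cylP_nonneg ρ s) with h | h
            · exact h
            · exact absurd (hac n s h.symm) h0
          have hνge : w n * (c n * cylP ρ s) ≤ cylP ν s :=
            le_trans (mul_le_mul_of_nonneg_left (hlow n s hs) (hwnn n)) (hmix n s)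
          have hνs : 0 < cylP ν s :=
            lt_of_lt_of_le (mul_pos hwn (mul_pos (hc n) hρs)) hνge
          have hlog : Real.log (cylP μ s / cylP ν s) ≤
              Real.log (cylP μ s / cylP ρ s) + A n := by
            rw [Real.log_div h0 hνs.ne', Real.log_div h0 hρs.ne']
            have : Real.log (w n * (c n * cylP ρ s)) ≤ Real.log (cylP ν s) :=
              Real.log_le_log (mul_pos hwn (mul_pos (hc n) hρs)) hνge
            rw [Real.log_mul hwn.ne' (mul_pos (hc n) hρs).ne',
              Real.log_mul (hc n).ne' hρs.ne'] at this
            simp only [hA]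
            linarith
          have := mul_le_mul_of_nonneg_left hlog hμs.le
          have h2 : cylP μ s * (Real.log (cylP μ s / cylP ρ s) + A n) ≤
              g s + cylP μ s * max (A n) 0 := by
            have hgs : g s = cylP μ s * Real.log (cylP μ s / cylP ρ s) := by
              rw [hg]; simp only [if_neg h0]
            have h3 : cylP μ s * A n ≤ cylP μ s * max (A n) 0 :=
              mul_le_mul_of_nonneg_left (le_max_left _ _) hμs.le
            have h4 : cylP μ s * (Real.log (cylP μ s / cylP ρ s) + A n)
                = cylP μ s * Real.log (cylP μ s / cylP ρ s) + cylP μ s * A n :=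
              mul_add _ _ _
            rw [h4, hgs]
            exact add_le_add (le_refl _) h3
          calc f s = cylP μ s * Real.log (cylP μ s / cylP ν s) := by
                rw [hf]; simp only [if_neg h0]
            _ ≤ cylP μ s * (Real.log (cylP μ s / cylP ρ s) + A n) := this
            _ ≤ g s + cylP μ s * max (A n) 0 := h2
      calc ∑ s ∈ S n, f s ≤ ∑ s ∈ S n, (g s + cylP μ s * max (A n) 0) :=
            Finset.sum_le_sum hterm
        _ = ∑ s ∈ S n, g s + (∑ s ∈ S n, cylP μ s) * max (A n) 0 := by
            rw [Finset.sum_add_distrib, Finset.sum_mul]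
        _ ≤ ∑ s ∈ S n, g s + 1 * max (A n) 0 := by
            have hsle : ∑ s ∈ S n, cylP μ s ≤ 1 := by
              rw [← hμsum n]
              exact Finset.sum_le_sum_of_subset_of_nonneg (Finset.subset_univ (S n))
                (fun s _ _ => cylP_nonneg μ s)
            have := mul_le_mul_of_nonneg_right hsle (le_max_right (A n) 0)
            linarith
        _ = ∑ s ∈ S n, g s + max (A n) 0 := by rw [one_mul]
    -- bound Σ_S g ≤ klDn μ ρ n + 1
    have hgS : ∑ s ∈ S n, g s ≤ klDn μ ρ n + 1 := by
      have hcomp : -1 ≤ ∑ s ∈ Finset.univ \ S n, g s := by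
        have h1 : ∀ s ∈ Finset.univ \ S n, -cylP ρ s ≤ g s := by
          intro s _
          have := term_lb μ ρ s (fun hμs => by
            rcases lt_or_eq_of_le (cylP_nonneg ρ s) with h | h
            · exact h
            · exact absurd (hac n s h.symm) hμs.ne')
          have h2 : 0 ≤ cylP μ s := cylP_nonneg μ s
          simp only [hg]
          linarith
        have h2 : ∑ s ∈ Finset.univ \ S n, (-cylP ρ s) ≤ ∑ s ∈ Finset.univ \ S n, g s :=
          Finset.sum_le_sum h1
        have h3 : ∑ s ∈ Finset.univ \ S n, cylP ρ s ≤ 1 := by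
          rw [← hρsum n]
          exact Finset.sum_le_sum_of_subset_of_nonneg (Finset.sdiff_subset)
            (fun s _ _ => cylP_nonneg ρ s)
        rw [Finset.sum_neg_distrib] at h2
        linarith
      linarith [hsplitg]
    -- bound on the complement
    have hCbound : ∑ s ∈ Finset.univ \ S n, f s ≤ B n * ε n := by
      have hterm : ∀ s ∈ Finset.univ \ S n, f s ≤ cylP μ s * B n := by
        intro s _
        by_cases h0 : cylP μ s = 0
        · simp [hf, h0]
        · have hμs : 0 < cylP μ s := lt_of_le_of_ne (cylP_nonneg μ s) (Ne.symm h0)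
          have hνge : w' n * ((Fintype.card X : ℝ) ^ n)⁻¹ ≤ cylP ν s := hνlow n s hμs
          have hνs : 0 < cylP ν s := hνpos n s hμs
          have hlog : Real.log (cylP μ s / cylP ν s) ≤ B n := by
            rw [Real.log_div h0 hνs.ne']
            have h1 : Real.log (w' n * ((Fintype.card X : ℝ) ^ n)⁻¹) ≤
                Real.log (cylP ν s) :=
              Real.log_le_log (mul_pos (hw' n) (inv_pos.mpr (pow_pos hcard0 n))) hνge
            rw [Real.log_mul (hw' n).ne' (inv_pos.mpr (pow_pos hcard0 n)).ne', Real.log_inv,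
              Real.log_pow] at h1
            have h2 : Real.log (cylP μ s) ≤ 0 :=
              Real.log_nonpos (cylP_nonneg μ s) (cylP_le_one μ s)
            have h3 : -Real.log (w' n) ≤ max (-Real.log (w' n)) 0 := le_max_left _ _
            simp only [hB]
            push_cast
            linarith
          calc f s = cylP μ s * Real.log (cylP μ s / cylP ν s) := by
                rw [hf]; simp only [if_neg h0]
            _ ≤ cylP μ s * B n := mul_le_mul_of_nonneg_left hlog hμs.le
      calc ∑ s ∈ Finset.univ \ S n, f s ≤ ∑ s ∈ Finset.univ \ S n, cylP μ s * B n :=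
            Finset.sum_le_sum hterm
        _ = B n * ε n := by rw [hε, ← Finset.sum_mul, mul_comm]
    linarith [hsplitf, hSbound, hgS, hCbound]
  -- limits
  have hlognn : Tendsto (fun n : ℕ => Real.log n / n) atTop (𝓝 0) :=
    (Real.isLittleO_log_id_atTop.tendsto_div_nhds_zero).comp tendsto_natCast_atTop_atTop
  have hwlog : Tendsto (fun n : ℕ => -Real.log (w n) / n) atTop (𝓝 0) := by
    have heq : ∀ᶠ n : ℕ in atTop, (Real.log (Real.pi ^ 2 / 6) * (1 / n) + 2 * (Real.log n / n))
        = -Real.log (w n) / n := by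
      filter_upwards [eventually_ge_atTop 1] with n hn
      have hn0 : (0:ℝ) < (n:ℝ) := by exact_mod_cast hn
      have : Real.log (w n) = Real.log (6 / Real.pi ^ 2) - 2 * Real.log n := by
        show Real.log (6 / Real.pi ^ 2 * ((n : ℝ) ^ 2)⁻¹) = _
        rw [Real.log_mul hπ.ne' (inv_pos.mpr (pow_pos hn0 2)).ne', Real.log_inv,
          Real.log_pow]
        push_cast
        ring
      have hlog6 : Real.log (6 / Real.pi ^ 2) = Real.log 6 - Real.log (Real.pi ^ 2) :=
        Real.log_div (by norm_num) (pow_ne_zero 2 Real.pi_ne_zero)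
      have hπ6 : Real.log (Real.pi ^ 2 / 6) = Real.log (Real.pi ^ 2) - Real.log 6 :=
        Real.log_div (pow_ne_zero 2 Real.pi_ne_zero) (by norm_num)
      rw [this, hlog6, hπ6]
      field_simp
      ring
    have hlim : Tendsto (fun n : ℕ => Real.log (Real.pi ^ 2 / 6) * (1 / n)
        + 2 * (Real.log n / n)) atTop (𝓝 0) := by
      have h1 := tendsto_one_div_atTop_nhds_zero_nat.const_mul (Real.log (Real.pi ^ 2 / 6))
      have h2 := hlognn.const_mul (2:ℝ)
      simpa only [mul_zero, add_zero] using h1.add h2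
    exact hlim.congr' heq
  have hAlim : Tendsto (fun n : ℕ => max (A n / n) 0) atTop (𝓝 0) := by
    have h1 : Tendsto (fun n : ℕ => A n / n) atTop (𝓝 0) := by
      have h := hwlog.add hco
      simp only [hA]
      rw [show (0:ℝ) = 0 + 0 by ring]
      exact h.congr fun n => by ring
    simpa only [max_self] using h1.max (tendsto_const_nhds : Tendsto (fun _ : ℕ => (0:ℝ)) atTop (𝓝 0))
  have hw'lim : Tendsto (fun n : ℕ => max (-Real.log (w' n) / n) 0) atTop (𝓝 0) := by
    simpa only [max_self] using hw'o.max (tendsto_const_nhds : Tendsto (fun _ : ℕ => (0:ℝ)) atTop (𝓝 0))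
  have hUBlim : Tendsto (fun n : ℕ =>
      (klDn μ ρ n + 1 + max (A n) 0 + B n * ε n) / n) atTop (𝓝 0) := by
    have hlim : Tendsto (fun n : ℕ => klDn μ ρ n / n + 1 / n + max (A n / n) 0
        + (max (-Real.log (w' n) / n) 0 + Real.log (Fintype.card X)) * ε n)
        atTop (𝓝 0) := by
      have h4 : Tendsto (fun n : ℕ =>
          (max (-Real.log (w' n) / n) 0 + Real.log (Fintype.card X)) * ε n)
          atTop (𝓝 0) := by
        have h5 := (hw'lim.add (tendsto_const_nhds :
          Tendsto _ atTop (𝓝 (Real.log (Fintype.card X))))).mul hSμ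
        rw [mul_zero] at h5
        exact h5
      simpa only [add_zero] using
        ((hd.add tendsto_one_div_atTop_nhds_zero_nat).add hAlim).add h4
    apply hlim.congr'
    filter_upwards [eventually_ge_atTop 1] with n hn
    have hn0 : (0:ℝ) < (n:ℝ) := by exact_mod_cast hn
    have hmaxA : max (A n / n) 0 = max (A n) 0 / n := by
      rw [← max_div_div_right hn0.le (A n) 0, zero_div]
    have hmaxw : max (-Real.log (w' n) / n) 0 = max (-Real.log (w' n)) 0 / n := by
      rw [← max_div_div_right hn0.le (-Real.log (w' n)) 0, zero_div]
    rw [hmaxA, hmaxw]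
    simp only [hB]
    field_simp
  -- squeeze
  have hLBlim : Tendsto (fun n : ℕ => (1 - (ν Set.univ).toReal) / n) atTop (𝓝 0) := by
    have h := tendsto_one_div_atTop_nhds_zero_nat.const_mul (1 - (ν Set.univ).toReal)
    simpa only [mul_one_div, mul_zero] using h
  refine tendsto_of_tendsto_of_tendsto_of_le_of_le' hLBlim hUBlim ?_ ?_
  · filter_upwards [eventually_ge_atTop 1] with n hn
    have hn0 : (0:ℝ) < (n:ℝ) := by exact_mod_cast hn
    exact (div_le_div_iff_of_pos_right hn0).mpr (hLB n)
  · filter_upwards [eventually_ge_atTop 1] with n hn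
    have hn0 : (0:ℝ) < (n:ℝ) := by exact_mod_cast hn
    exact (div_le_div_iff_of_pos_right hn0).mpr (hUB n hn)
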